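/- arXiv:0803.2639 — 2 statements merged into one kernel-verified Lean document; each statement's English description precedes it below -/
import Mathlib

section
/- An element q = c₁ + ξc₂ + jc₃ + jξc₄ of H (with c₁,…,c₄ ∈ Q(i)) belongs to the Hurwitz-type ring 𝓗 if and only if (1+i)cₜ ∈ ℤ[i] for all t = 1,2,3,4 and c₁+c₃ ∈ ℤ[i] and c₂+c₄ ∈ ℤ[i]. -/
open Quaternion Complex

noncomputable def toQ (z : ℂ) : Quaternion ℝ := ⟨z.re, z.im, 0, 0⟩
def jj : Quaternion ℝ := ⟨0, 0, 1, 0⟩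
noncomputable def xiC : ℂ := Complex.exp (Real.pi * Complex.I / 4)
noncomputable def xiQ : Quaternion ℝ := toQ xiC
def Gq (a b : ℤ) : Quaternion ℝ := ⟨(a : ℝ), (b : ℝ), 0, 0⟩
noncomputable def rhoQ : Quaternion ℝ := ⟨1/2, 1/2, 1/2, 1/2⟩

/-- `z` is a Gaussian integer. -/
def IsGaussian (z : ℂ) : Prop := ∃ a b : ℤ, z = a + b * Complex.I

/-- `z` belongs to `ℚ(i)`. -/
def InQi (z : ℂ) : Prop := ∃ a b : ℚ, z = a + b * Complex.I

/-- The Hurwitz-type ring `𝓗 = ρℤ[i] ⊕ ρξℤ[i] ⊕ jℤ[i] ⊕ jξℤ[i]`. -/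
noncomputable def HurSet : Set (Quaternion ℝ) :=
  {q | ∃ a₁ b₁ a₂ b₂ a₃ b₃ a₄ b₄ : ℤ,
    q = rhoQ * Gq a₁ b₁ + rhoQ * xiQ * Gq a₂ b₂ + jj * Gq a₃ b₃ + jj * xiQ * Gq a₄ b₄}

lemma xiC_re : xiC.re = Real.sqrt 2 / 2 := by
  have : xiC = Complex.exp ((Real.pi/4 : ℝ) * Complex.I) := by
    unfold xiC; push_cast; ring_nf
  rw [this, Complex.exp_ofReal_mul_I_re, Real.cos_pi_div_four]

lemma xiC_im : xiC.im = Real.sqrt 2 / 2 := by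
  have : xiC = Complex.exp ((Real.pi/4 : ℝ) * Complex.I) := by
    unfold xiC; push_cast; ring_nf
  rw [this, Complex.exp_ofReal_mul_I_im, Real.sin_pi_div_four]

noncomputable def s : ℝ := Real.sqrt 2 / 2

lemma sep (p q p' q' : ℚ) (h : (p:ℝ) + s * q = p' + s * q') : p = p' ∧ q = q' := by
  have hirr : Irrational s := by
    simpa [s] using irrational_sqrt_two.div_natCast (m := 2) (by norm_num)
  by_cases hq : q = q'
  · subst hq
    constructor
    · exact_mod_cast (by linarith : (p:ℝ) = p')
    · rfl
  · exfalso
    have hne : ((q - q' : ℚ) : ℝ) ≠ 0 := by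
      exact_mod_cast sub_ne_zero.mpr hq
    have : s = ((p' - p) / (q - q') : ℚ) := by
      push_cast at hne ⊢
      field_simp
      nlinarith [h]
    exact hirr ⟨_, this.symm⟩

lemma hur_eq (a₁ b₁ a₂ b₂ a₃ b₃ a₄ b₄ : ℤ) :
    rhoQ * Gq a₁ b₁ + rhoQ * xiQ * Gq a₂ b₂ + jj * Gq a₃ b₃ + jj * xiQ * Gq a₄ b₄ =
    ⟨((a₁:ℝ) - b₁)/2 - s * b₂, ((a₁:ℝ) + b₁)/2 + s * a₂,
     ((a₁:ℝ) + b₁)/2 + s * a₂ + a₃ + s * ((a₄:ℝ) - b₄),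
     ((a₁:ℝ) - b₁)/2 - s * b₂ - b₃ - s * ((a₄:ℝ) + b₄)⟩ := by
  ext <;>
  simp only [Quaternion.re_add, Quaternion.imI_add, Quaternion.imJ_add, Quaternion.imK_add,
    Quaternion.re_mul, Quaternion.imI_mul, Quaternion.imJ_mul, Quaternion.imK_mul] <;>
  simp [rhoQ, Gq, jj, xiQ, toQ, xiC_re, xiC_im, s,
    Quaternion.re_mul, Quaternion.imI_mul, Quaternion.imJ_mul, Quaternion.imK_mul] <;>
  ring

lemma lhs_eq (x₁ y₁ x₂ y₂ x₃ y₃ x₄ y₄ : ℝ) :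
    toQ (⟨x₁, y₁⟩ : ℂ) + xiQ * toQ (⟨x₂, y₂⟩ : ℂ) + jj * toQ (⟨x₃, y₃⟩ : ℂ)
      + jj * xiQ * toQ (⟨x₄, y₄⟩ : ℂ) =
    ⟨x₁ + s * (x₂ - y₂), y₁ + s * (x₂ + y₂), x₃ + s * (x₄ - y₄), -y₃ - s * (x₄ + y₄)⟩ := by
  ext <;>
  simp only [Quaternion.re_add, Quaternion.imI_add, Quaternion.imJ_add, Quaternion.imK_add,
    Quaternion.re_mul, Quaternion.imI_mul, Quaternion.imJ_mul, Quaternion.imK_mul] <;>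
  simp [Gq, jj, xiQ, toQ, xiC_re, xiC_im, s,
    Quaternion.re_mul, Quaternion.imI_mul, Quaternion.imJ_mul, Quaternion.imK_mul] <;>
  ring

lemma quat_mk_eq (r1 i1 j1 k1 r2 i2 j2 k2 : ℝ) :
    Eq (α := Quaternion ℝ) ⟨r1,i1,j1,k1⟩ ⟨r2,i2,j2,k2⟩ ↔
      (r1 = r2 ∧ i1 = i2 ∧ j1 = j2 ∧ k1 = k2) := by
  constructor
  · intro h
    exact ⟨congrArg QuaternionAlgebra.re h, congrArg QuaternionAlgebra.imI h,
      congrArg QuaternionAlgebra.imJ h, congrArg QuaternionAlgebra.imK h⟩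
  · rintro ⟨h1, h2, h3, h4⟩; rw [h1, h2, h3, h4]

lemma mulI_mk (x y : ℝ) : (1 + Complex.I) * (⟨x, y⟩ : ℂ) = ⟨x - y, x + y⟩ := by
  apply Complex.ext <;> simp <;> ring

lemma gauss_mk (x y : ℚ) :
    IsGaussian (⟨(x:ℝ), (y:ℝ)⟩ : ℂ) ↔ ∃ m n : ℤ, x = m ∧ y = n := by
  constructor
  · rintro ⟨a, b, hab⟩
    refine ⟨a, b, ?_, ?_⟩
    · have := congrArg Complex.re hab
      simp at this; exact_mod_cast this
    · have := congrArg Complex.im hab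
      simp at this; exact_mod_cast this
  · rintro ⟨m, n, hm, hn⟩
    exact ⟨m, n, by apply Complex.ext <;> simp [hm, hn]⟩

/-- An element `q = c₁ + ξc₂ + jc₃ + jξc₄` of `H` (with `cₜ ∈ ℚ(i)`) belongs to
the Hurwitz-type ring `𝓗` iff `(1+i)cₜ ∈ ℤ[i]` for all `t`, `c₁+c₃ ∈ ℤ[i]` and
`c₂+c₄ ∈ ℤ[i]`. -/
theorem stmt3 (c₁ c₂ c₃ c₄ : ℂ)
    (h₁ : InQi c₁) (h₂ : InQi c₂) (h₃ : InQi c₃) (h₄ : InQi c₄) :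
    (toQ c₁ + xiQ * toQ c₂ + jj * toQ c₃ + jj * xiQ * toQ c₄) ∈ HurSet ↔
      (IsGaussian ((1 + Complex.I) * c₁) ∧ IsGaussian ((1 + Complex.I) * c₂) ∧
       IsGaussian ((1 + Complex.I) * c₃) ∧ IsGaussian ((1 + Complex.I) * c₄)) ∧
      IsGaussian (c₁ + c₃) ∧ IsGaussian (c₂ + c₄) := by
  obtain ⟨x₁, y₁, hc1'⟩ := h₁
  obtain ⟨x₂, y₂, hc2'⟩ := h₂
  obtain ⟨x₃, y₃, hc3'⟩ := h₃
  obtain ⟨x₄, y₄, hc4'⟩ := h₄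
  have hc1 : c₁ = (⟨(x₁:ℝ), (y₁:ℝ)⟩ : ℂ) := by
    rw [hc1']; apply Complex.ext <;> simp
  have hc2 : c₂ = (⟨(x₂:ℝ), (y₂:ℝ)⟩ : ℂ) := by
    rw [hc2']; apply Complex.ext <;> simp
  have hc3 : c₃ = (⟨(x₃:ℝ), (y₃:ℝ)⟩ : ℂ) := by
    rw [hc3']; apply Complex.ext <;> simp
  have hc4 : c₄ = (⟨(x₄:ℝ), (y₄:ℝ)⟩ : ℂ) := by
    rw [hc4']; apply Complex.ext <;> simp
  subst hc1; subst hc2; subst hc3; subst hc4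
  have hadd13 : (⟨(x₁:ℝ), (y₁:ℝ)⟩ : ℂ) + ⟨(x₃:ℝ), (y₃:ℝ)⟩
      = (⟨((x₁+x₃ : ℚ):ℝ), ((y₁+y₃ : ℚ):ℝ)⟩ : ℂ) := by
    apply Complex.ext <;> simp <;> push_cast <;> ring
  have hadd24 : (⟨(x₂:ℝ), (y₂:ℝ)⟩ : ℂ) + ⟨(x₄:ℝ), (y₄:ℝ)⟩
      = (⟨((x₂+x₄ : ℚ):ℝ), ((y₂+y₄ : ℚ):ℝ)⟩ : ℂ) := by
    apply Complex.ext <;> simp <;> push_cast <;> ring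
  have hm1 : (1 + Complex.I) * (⟨(x₁:ℝ), (y₁:ℝ)⟩ : ℂ)
      = (⟨((x₁-y₁ : ℚ):ℝ), ((x₁+y₁ : ℚ):ℝ)⟩ : ℂ) := by
    rw [mulI_mk]; apply Complex.ext <;> simp <;> push_cast <;> ring
  have hm2 : (1 + Complex.I) * (⟨(x₂:ℝ), (y₂:ℝ)⟩ : ℂ)
      = (⟨((x₂-y₂ : ℚ):ℝ), ((x₂+y₂ : ℚ):ℝ)⟩ : ℂ) := by
    rw [mulI_mk]; apply Complex.ext <;> simp <;> push_cast <;> ring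
  have hm3 : (1 + Complex.I) * (⟨(x₃:ℝ), (y₃:ℝ)⟩ : ℂ)
      = (⟨((x₃-y₃ : ℚ):ℝ), ((x₃+y₃ : ℚ):ℝ)⟩ : ℂ) := by
    rw [mulI_mk]; apply Complex.ext <;> simp <;> push_cast <;> ring
  have hm4 : (1 + Complex.I) * (⟨(x₄:ℝ), (y₄:ℝ)⟩ : ℂ)
      = (⟨((x₄-y₄ : ℚ):ℝ), ((x₄+y₄ : ℚ):ℝ)⟩ : ℂ) := by
    rw [mulI_mk]; apply Complex.ext <;> simp <;> push_cast <;> ring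
  rw [hm1, hm2, hm3, hm4, hadd13, hadd24, gauss_mk, gauss_mk, gauss_mk, gauss_mk,
    gauss_mk, gauss_mk]
  simp only [HurSet, Set.mem_setOf_eq, lhs_eq]
  constructor
  · rintro ⟨a₁, b₁, a₂, b₂, a₃, b₃, a₄, b₄, h⟩
    rw [hur_eq, quat_mk_eq] at h
    obtain ⟨h1, h2, h3, h4⟩ := h
    obtain ⟨E1a, E1b⟩ := sep x₁ (x₂ - y₂) (((a₁:ℚ) - b₁)/2) (-(b₂:ℚ))
      (by push_cast; linear_combination h1)
    obtain ⟨E2a, E2b⟩ := sep y₁ (x₂ + y₂) (((a₁:ℚ) + b₁)/2) ((a₂:ℚ))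
      (by push_cast; linear_combination h2)
    obtain ⟨E3a, E3b⟩ := sep x₃ (x₄ - y₄) (((a₁:ℚ) + b₁)/2 + a₃) ((a₂:ℚ) + a₄ - b₄)
      (by push_cast; linear_combination h3)
    obtain ⟨E4a, E4b⟩ := sep (-y₃) (-(x₄ + y₄)) (((a₁:ℚ) - b₁)/2 - b₃) (-(b₂:ℚ) - a₄ - b₄)
      (by push_cast; linear_combination h4)
    refine ⟨⟨⟨-b₁, a₁, by push_cast; constructor <;> linarith⟩,
      ⟨-b₂, a₂, by push_cast; constructor <;> linarith⟩,
      ⟨a₁ + a₃ - b₃, b₁ + a₃ + b₃, by push_cast; constructor <;> linarith⟩,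
      ⟨a₂ + a₄ - b₄, b₂ + a₄ + b₄, by push_cast; constructor <;> linarith⟩⟩,
      ⟨a₁ + a₃, b₁ + b₃, by push_cast; constructor <;> linarith⟩,
      ⟨a₂ + a₄, b₂ + b₄, by push_cast; constructor <;> linarith⟩⟩
  · rintro ⟨⟨⟨d₁, e₁, hd₁, he₁⟩, ⟨d₂, e₂, hd₂, he₂⟩, ⟨d₃, e₃, hd₃, he₃⟩,
      ⟨d₄, e₄, hd₄, he₄⟩⟩, ⟨p₁, q₁, hp₁, hq₁⟩, ⟨p₂, q₂, hp₂, hq₂⟩⟩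
    refine ⟨e₁, -d₁, e₂, -d₂, p₁ - e₁, d₁ + q₁, p₂ - e₂, d₂ + q₂, ?_⟩
    rw [hur_eq, quat_mk_eq]
    have hd₁' : (x₁:ℝ) - y₁ = (d₁:ℝ) := by exact_mod_cast congrArg (Rat.cast (K := ℝ)) hd₁
    have he₁' : (x₁:ℝ) + y₁ = (e₁:ℝ) := by exact_mod_cast congrArg (Rat.cast (K := ℝ)) he₁
    have hd₂' : (x₂:ℝ) - y₂ = (d₂:ℝ) := by exact_mod_cast congrArg (Rat.cast (K := ℝ)) hd₂
    have he₂' : (x₂:ℝ) + y₂ = (e₂:ℝ) := by exact_mod_cast congrArg (Rat.cast (K := ℝ)) he₂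
    have hd₃' : (x₃:ℝ) - y₃ = (d₃:ℝ) := by exact_mod_cast congrArg (Rat.cast (K := ℝ)) hd₃
    have he₃' : (x₃:ℝ) + y₃ = (e₃:ℝ) := by exact_mod_cast congrArg (Rat.cast (K := ℝ)) he₃
    have hd₄' : (x₄:ℝ) - y₄ = (d₄:ℝ) := by exact_mod_cast congrArg (Rat.cast (K := ℝ)) hd₄
    have he₄' : (x₄:ℝ) + y₄ = (e₄:ℝ) := by exact_mod_cast congrArg (Rat.cast (K := ℝ)) he₄
    have hp₁' : (x₁:ℝ) + x₃ = (p₁:ℝ) := by exact_mod_cast congrArg (Rat.cast (K := ℝ)) hp₁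
    have hq₁' : (y₁:ℝ) + y₃ = (q₁:ℝ) := by exact_mod_cast congrArg (Rat.cast (K := ℝ)) hq₁
    have hp₂' : (x₂:ℝ) + x₄ = (p₂:ℝ) := by exact_mod_cast congrArg (Rat.cast (K := ℝ)) hp₂
    have hq₂' : (y₂:ℝ) + y₄ = (q₂:ℝ) := by exact_mod_cast congrArg (Rat.cast (K := ℝ)) hq₂
    refine ⟨?_, ?_, ?_, ?_⟩ <;> push_cast
    · linear_combination (he₁' + hd₁')/2 + s * hd₂'
    · linear_combination (he₁' - hd₁')/2 + s * he₂'
    · linear_combination (he₁' - hd₁')/2 + hp₁' - he₁' + s * (hp₂' - hd₂' - hq₂')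
    · linear_combination (he₁' + hd₁')/2 - hd₁' - hq₁' + s * (he₂' - hp₂' - hq₂')
end

section
/- The diamond lattice E₈ realized inside the quaternion order, namely E₈ = (1/(1+i)){(c₁,c₂,c₃,c₄) ∈ ℤ[i]⁴ : c₁ ≡ cₜ mod (1+i) for t=2,3,4, and Σcₜ ∈ 2ℤ[i]} (identified with quaternions c₁ + ξc₂ + jc₃ + jξc₄), equals the left ideal 𝓗(1+ξ) of the Hurwitz-type order 𝓗 generated by 1+ξ. -/
open Quaternion Complex

def InIdeal (z : ℂ) : Prop := ∃ a b : ℤ, z = (1 + Complex.I) * (a + b * Complex.I)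

/-- The `E₈` lattice realized inside the quaternion algebra:
`(1/(1+i)){(c₁,c₂,c₃,c₄) ∈ ℤ[i]⁴ : c₁ ≡ cₜ mod (1+i), Σcₜ ∈ 2ℤ[i]}` under the
identification with quaternions `c₁ + ξc₂ + jc₃ + jξc₄`. -/
noncomputable def E8set : Set (Quaternion ℝ) :=
  {q | ∃ c : Fin 4 → ℂ, (∀ t, IsGaussian (c t)) ∧
    (∀ t, InIdeal (c 0 - c t)) ∧
    (∃ a b : ℤ, c 0 + c 1 + c 2 + c 3 = 2 * (a + b * Complex.I)) ∧
    q = toQ (c 0 / (1 + Complex.I)) + xiQ * toQ (c 1 / (1 + Complex.I)) +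
        jj * toQ (c 2 / (1 + Complex.I)) + jj * xiQ * toQ (c 3 / (1 + Complex.I))}

theorem xiC_eq : xiC = ⟨Real.sqrt 2 / 2, Real.sqrt 2 / 2⟩ := by
  unfold xiC
  rw [show (Real.pi : ℂ) * Complex.I / 4 = (Real.pi/4 : ℝ) * Complex.I by push_cast; ring]
  rw [Complex.exp_mul_I]
  simp [Complex.ext_iff, ← Complex.ofReal_div, Complex.cos_ofReal_re, Complex.sin_ofReal_re,
    Real.cos_pi_div_four, Real.sin_pi_div_four]

set_option maxHeartbeats 4000000 in
/-- The diamond lattice `E₈` equals the left ideal `𝓗(1+ξ)` of the Hurwitz-type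
order `𝓗` generated by `1 + ξ`. -/
theorem stmt13 : E8set = (fun h => h * (1 + xiQ)) '' HurSet := by
  have h2 : Real.sqrt 2 ^ 2 = 2 := Real.sq_sqrt (by norm_num)
  ext q
  constructor
  · rintro ⟨c, hG, hI, ⟨a, b, hs⟩, rfl⟩
    obtain ⟨p, qq, hc0⟩ := hG 0
    obtain ⟨x₁, y₁, h1⟩ := hI 1
    obtain ⟨x₂, y₂, h2'⟩ := hI 2
    obtain ⟨x₃, y₃, h3⟩ := hI 3
    have hc1 : c 1 = c 0 - (1 + Complex.I) * (x₁ + y₁ * Complex.I) := by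
      linear_combination -h1
    have hc2 : c 2 = c 0 - (1 + Complex.I) * (x₂ + y₂ * Complex.I) := by
      linear_combination -h2'
    have hc3 : c 3 = c 0 - (1 + Complex.I) * (x₃ + y₃ * Complex.I) := by
      linear_combination -h3
    rw [hc1, hc2, hc3, hc0] at hs ⊢
    rw [Complex.ext_iff] at hs
    obtain ⟨hre, him⟩ := hs
    simp [Complex.add_re, Complex.add_im, Complex.mul_re, Complex.mul_im] at hre him
    have hx2 : (x₂ : ℝ) = 2*p + 2*qq - a - b - x₁ - x₃ := by linarith
    have hy2 : (y₂ : ℝ) = a - b - 2*p + 2*qq - y₁ - y₃ := by linarith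
    refine ⟨rhoQ * Gq (qq - y₁) (x₁ - p) + rhoQ * xiQ * Gq (-x₁) (-y₁)
      + jj * Gq (a - p - y₃) (b - qq + x₃)
      + jj * xiQ * Gq (2*p - a + y₁ - x₃ + y₃) (2*qq - b - x₁ - x₃ - y₃),
      ⟨_, _, _, _, _, _, _, _, rfl⟩, ?_⟩
    ext <;>
      simp only [Quaternion.re_add, Quaternion.imI_add, Quaternion.imJ_add, Quaternion.imK_add, Quaternion.re_mul, Quaternion.imI_mul, Quaternion.imJ_mul, Quaternion.imK_mul, Quaternion.re_one, Quaternion.imI_one, Quaternion.imJ_one, Quaternion.imK_one] <;>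
      simp [toQ, jj, xiQ, Gq, rhoQ, xiC_eq, Complex.div_re, Complex.div_im,
        Complex.normSq_apply, Complex.add_re, Complex.add_im, Complex.sub_re,
        Complex.sub_im, Complex.mul_re, Complex.mul_im] <;>
      push_cast <;> (try rw [hx2, hy2]) <;> ring_nf <;> (try rw [h2]) <;> ring
  · rintro ⟨h, ⟨a₁, b₁, a₂, b₂, a₃, b₃, a₄, b₄, rfl⟩, rfl⟩
    refine ⟨![((-b₁ - a₂ : ℤ) : ℂ) + ((a₁ - b₂ : ℤ) : ℂ) * Complex.I,
      ((-b₁ - b₂ : ℤ) : ℂ) + ((a₁ + a₂ : ℤ) : ℂ) * Complex.I,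
      ((a₁ - b₂ + a₃ - b₃ - a₄ - b₄ : ℤ) : ℂ) + ((b₁ + a₂ + a₃ + b₃ + a₄ - b₄ : ℤ) : ℂ) * Complex.I,
      ((a₁ + a₂ + a₃ - b₃ + a₄ - b₄ : ℤ) : ℂ) + ((b₁ + b₂ + a₃ + b₃ + a₄ + b₄ : ℤ) : ℂ) * Complex.I],
      ?_, ?_, ?_, ?_⟩
    · intro t
      fin_cases t <;> exact ⟨_, _, rfl⟩
    · intro t
      fin_cases t
      · exact ⟨0, 0, by simp⟩
      · exact ⟨-a₂, -b₂, by apply Complex.ext <;> simp <;> ring⟩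
      · exact ⟨-b₁ - a₂ - a₃ + b₄, a₁ - b₂ - b₃ - a₄, by apply Complex.ext <;> simp <;> ring⟩
      · exact ⟨-b₁ - a₂ - b₂ - a₃ - a₄, a₁ + a₂ - b₂ - b₃ - b₄, by apply Complex.ext <;> simp <;> ring⟩
    · exact ⟨a₁ - b₁ - b₂ + a₃ - b₃ - b₄, a₁ + b₁ + a₂ + a₃ + b₃ + a₄, by apply Complex.ext <;> simp <;> ring⟩
    · show _ = _
      ext <;>
        simp only [Quaternion.re_add, Quaternion.imI_add, Quaternion.imJ_add, Quaternion.imK_add, Quaternion.re_mul, Quaternion.imI_mul, Quaternion.imJ_mul, Quaternion.imK_mul, Quaternion.re_one, Quaternion.imI_one, Quaternion.imJ_one, Quaternion.imK_one] <;>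
        simp [toQ, jj, xiQ, Gq, rhoQ, xiC_eq, Complex.div_re, Complex.div_im,
          Complex.normSq_apply, Complex.add_re, Complex.add_im, Complex.mul_re,
          Complex.mul_im] <;>
        push_cast <;> ring_nf <;> rw [h2] <;> ring
end
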